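/- Let A = P₁ − R₁ + S₁ be a double proper weak regular splitting and A = P₂ − R₂ + S₂ be a double proper regular splitting of a semi-monotone matrix A ∈ ℝ^{m×n}. Suppose N(S₂) = N(P₂), R(S₂) = R(P₂), I − S₂P₁† and I + R₂P₁† are nonsingular, Â† ≥ 0 and 𝒜̂† ≥ 0, where Â = (I − S₂P₁†)A and 𝒜̂ = (I + R₂P₁†)A. Setting P̂ = 𝒫̂ = P₂, R̂ = R₂ − S₂P₁†R₁ and ℛ̂ = R₂P₁†R₁ − S₂, if 𝒫̂†ℛ̂ ≥ P̂†R̂ and 𝒫̂†𝒜̂ ≥ P̂†Â, then ρ(𝒲₁₂) ≤ ρ(W₁₂) < 1. -/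

import Mathlib

open Matrix

/-- Spectral radius of a real square matrix: the maximum modulus of its complex eigenvalues. -/
noncomputable def specRad {ι : Type*} [Fintype ι] [DecidableEq ι] (M : Matrix ι ι ℝ) : ℝ :=
  sSup ((fun z : ℂ => ‖z‖) '' spectrum ℂ (M.map Complex.ofReal))

/-- `X` satisfies the four Penrose equations for `A`, i.e. `X` is the Moore-Penrose
inverse of `A`. -/
def IsMP {m n : ℕ} (A : Matrix (Fin m) (Fin n) ℝ) (X : Matrix (Fin n) (Fin m) ℝ) : Prop :=
  A * X * A = A ∧ X * A * X = X ∧ (A * X)ᵀ = A * X ∧ (X * A)ᵀ = X * A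

/-- Entrywise comparison of matrices: `MatLE A B` means `A ≤ B` entrywise. -/
def MatLE {m n : ℕ} (A B : Matrix (Fin m) (Fin n) ℝ) : Prop := ∀ i j, A i j ≤ B i j

open Filter
open scoped ENNReal NNReal
set_option linter.unusedSectionVars false
set_option maxHeartbeats 1000000

namespace ADSAux
variable {ι : Type*} [Fintype ι] [DecidableEq ι]

attribute [local instance] Matrix.linftyOpNormedRing Matrix.linftyOpNormedAlgebra
  Matrix.linftyOpNormedSpace

noncomputable local instance : CompleteSpace (Matrix ι ι ℂ) := FiniteDimensional.complete ℂ _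

lemma exists_eigenvector {M : Matrix ι ι ℝ} {z : ℂ}
    (hz : z ∈ spectrum ℂ (M.map Complex.ofReal)) :
    ∃ v : ι → ℂ, v ≠ 0 ∧ (M.map Complex.ofReal) *ᵥ v = z • v := by
  set Mc := M.map (Complex.ofReal) with hMc
  have hnu : ¬ IsUnit (algebraMap ℂ (Matrix ι ι ℂ) z - Mc) := spectrum.mem_iff.mp hz
  have hdet : (algebraMap ℂ (Matrix ι ι ℂ) z - Mc).det = 0 := by
    by_contra h
    exact hnu ((Matrix.isUnit_iff_isUnit_det _).mpr (isUnit_iff_ne_zero.mpr h))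
  obtain ⟨v, hv0, hv⟩ := (Matrix.exists_mulVec_eq_zero_iff).mpr hdet
  refine ⟨v, hv0, ?_⟩
  have : (algebraMap ℂ (Matrix ι ι ℂ) z - Mc) *ᵥ v = 0 := hv
  rw [Matrix.sub_mulVec, sub_eq_zero, Algebra.algebraMap_eq_smul_one,
    Matrix.smul_mulVec, Matrix.one_mulVec] at this
  exact this.symm

lemma abs_mulVec_le {M : Matrix ι ι ℝ} (hM : ∀ i j, 0 ≤ M i j) (v : ι → ℂ) (i : ι) :
    ‖(M.map Complex.ofReal *ᵥ v) i‖ ≤ (M *ᵥ fun j => ‖v j‖) i := by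
  simp only [Matrix.mulVec, dotProduct, Matrix.map_apply]
  calc ‖∑ j, (Complex.ofReal (M i j)) * v j‖
      ≤ ∑ j, ‖(Complex.ofReal (M i j)) * v j‖ := norm_sum_le _ _
    _ = ∑ j, M i j * ‖v j‖ := by
        refine Finset.sum_congr rfl fun j _ => ?_
        rw [norm_mul, Complex.norm_real, Real.norm_of_nonneg (hM i j)]

/-- PF-lite upper bound: eigenvalue bound from a positive super-eigenvector. -/
lemma abs_le_of_mem_spectrum {M : Matrix ι ι ℝ} {x : ι → ℝ} {θ : ℝ}
    (hM : ∀ i j, 0 ≤ M i j) (hx : ∀ i, 0 < x i) (hMx : ∀ i, (M *ᵥ x) i ≤ θ * x i)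
    {z : ℂ} (hz : z ∈ spectrum ℂ (M.map Complex.ofReal)) : ‖z‖ ≤ θ := by
  obtain ⟨v, hv0, hv⟩ := exists_eigenvector hz
  set g : ι → ℝ := fun i => ‖v i‖ with hg
  have hne : (Finset.univ : Finset ι).Nonempty := by
    obtain ⟨i, _⟩ := Function.ne_iff.mp hv0
    exact ⟨i, Finset.mem_univ i⟩
  obtain ⟨i₀, -, hi₀⟩ := Finset.exists_max_image Finset.univ (fun i => g i / x i) hne
  have hgle : ∀ i, g i ≤ g i₀ / x i₀ * x i := by
    intro i
    have h1 := hi₀ i (Finset.mem_univ i)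
    calc g i = g i / x i * x i := (div_mul_cancel₀ _ (hx i).ne').symm
      _ ≤ g i₀ / x i₀ * x i := mul_le_mul_of_nonneg_right h1 (hx i).le
  have hgi₀ : 0 < g i₀ := by
    obtain ⟨i, hi⟩ := Function.ne_iff.mp hv0
    have hgi : 0 < g i := by
      have := norm_pos_iff.mpr hi
      simpa [hg] using this
    have h2 : 0 < g i₀ / x i₀ * x i := lt_of_lt_of_le hgi (hgle i)
    by_contra h
    push_neg at h
    have : g i₀ / x i₀ * x i ≤ 0 :=
      mul_nonpos_of_nonpos_of_nonneg (div_nonpos_of_nonpos_of_nonneg h (hx i₀).le) (hx i).le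
    linarith
  have key : ‖z‖ * g i₀ ≤ θ * g i₀ := by
    have h1 : ‖z‖ * g i₀ = ‖(M.map Complex.ofReal *ᵥ v) i₀‖ := by
      rw [hv]; simp [hg, Pi.smul_apply, smul_eq_mul, _root_.map_mul]
    have h2 : (M *ᵥ g) i₀ ≤ g i₀ / x i₀ * (M *ᵥ x) i₀ := by
      simp only [Matrix.mulVec, dotProduct, Finset.mul_sum]
      refine Finset.sum_le_sum fun j _ => ?_
      calc M i₀ j * g j ≤ M i₀ j * (g i₀ / x i₀ * x j) :=
            mul_le_mul_of_nonneg_left (hgle j) (hM i₀ j)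
        _ = g i₀ / x i₀ * (M i₀ j * x j) := by ring
    have h3 : g i₀ / x i₀ * (M *ᵥ x) i₀ ≤ g i₀ / x i₀ * (θ * x i₀) := by
      exact mul_le_mul_of_nonneg_left (hMx i₀) (div_nonneg hgi₀.le (hx i₀).le)
    have h4 : g i₀ / x i₀ * (θ * x i₀) = θ * g i₀ := by
      have hx0 : x i₀ ≠ 0 := (hx i₀).ne'
      field_simp
    calc ‖z‖ * g i₀ = ‖(M.map Complex.ofReal *ᵥ v) i₀‖ := h1
      _ ≤ (M *ᵥ g) i₀ := abs_mulVec_le hM v i₀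
      _ ≤ g i₀ / x i₀ * (M *ᵥ x) i₀ := h2
      _ ≤ g i₀ / x i₀ * (θ * x i₀) := h3
      _ = θ * g i₀ := h4
  exact le_of_mul_le_mul_right (by linarith [key]) hgi₀

lemma specRad_nonneg (M : Matrix ι ι ℝ) : 0 ≤ specRad M :=
  Real.sSup_nonneg (by rintro r ⟨z, _, rfl⟩; exact norm_nonneg z)

lemma specRad_le {M : Matrix ι ι ℝ} {x : ι → ℝ} {θ : ℝ} (hθ : 0 ≤ θ)
    (hM : ∀ i j, 0 ≤ M i j) (hx : ∀ i, 0 < x i) (hMx : ∀ i, (M *ᵥ x) i ≤ θ * x i) :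
    specRad M ≤ θ := by
  refine Real.sSup_le ?_ hθ
  rintro r ⟨z, hz, rfl⟩
  exact abs_le_of_mem_spectrum hM hx hMx hz

lemma map_pow' (M : Matrix ι ι ℝ) (k : ℕ) :
    (M ^ k).map Complex.ofReal = (M.map Complex.ofReal) ^ k := by
  induction k with
  | zero => simp [Matrix.map_one]
  | succ k ih =>
      rw [pow_succ, pow_succ, ← ih]
      exact Matrix.map_mul (f := Complex.ofRealHom)

lemma specRad_bddAbove (M : Matrix ι ι ℝ) :
    BddAbove ((fun z : ℂ => ‖z‖) '' spectrum ℂ (M.map Complex.ofReal)) := by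
  have hc : IsCompact (spectrum ℂ (M.map Complex.ofReal)) := spectrum.isCompact _
  exact (hc.image continuous_norm).bddAbove

lemma rowsum_le_norm (B : Matrix ι ι ℝ) (hB : ∀ i j, 0 ≤ B i j) (i : ι) :
    ∑ j, B i j ≤ ‖B.map Complex.ofReal‖ := by
  rw [Matrix.linfty_opNorm_def]
  have key : (∑ j, ‖(B.map Complex.ofReal) i j‖₊)
      ≤ Finset.univ.sup (fun i => ∑ j, ‖(B.map Complex.ofReal) i j‖₊) :=
    Finset.le_sup (f := fun i => ∑ j, ‖(B.map Complex.ofReal) i j‖₊) (Finset.mem_univ i)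
  have h2 : ∑ j, B i j = ((∑ j, ‖(B.map Complex.ofReal) i j‖₊ : ℝ≥0) : ℝ) := by
    rw [NNReal.coe_sum]
    refine Finset.sum_congr rfl fun j _ => ?_
    simp [Matrix.map_apply, abs_of_nonneg (hB i j)]
  rw [h2]
  exact_mod_cast key

/-- PF-lite lower bound. -/
lemma le_specRad {M : Matrix ι ι ℝ} {u : ι → ℝ} {μ : ℝ}
    (hM : ∀ i j, 0 ≤ M i j) (hu : ∀ i, 0 ≤ u i) (hune : u ≠ 0) (hμ : 0 ≤ μ)
    (hMu : ∀ i, μ * u i ≤ (M *ᵥ u) i) : μ ≤ specRad M := by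
  by_contra hcon
  push_neg at hcon
  set Mc := M.map Complex.ofReal with hMcdef
  -- powers: nonneg entries and lower bound
  have hpow : ∀ k : ℕ, (∀ i j, 0 ≤ (M ^ k) i j) ∧ (∀ i, μ ^ k * u i ≤ ((M ^ k) *ᵥ u) i) := by
    intro k
    induction k with
    | zero =>
        refine ⟨fun i j => ?_, fun i => by simp [Matrix.one_mulVec]⟩
        rw [pow_zero, Matrix.one_apply]
        split <;> norm_num
    | succ k ih =>
        constructor
        · intro i j
          rw [pow_succ']
          exact Finset.sum_nonneg fun l _ => mul_nonneg (hM i l) (ih.1 l j)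
        · intro i
          have h1 : ((M ^ (k+1)) *ᵥ u) i = (M *ᵥ ((M ^ k) *ᵥ u)) i := by
            rw [Matrix.mulVec_mulVec, pow_succ']
          rw [h1]
          have h2 : ∀ j, μ ^ k * u j ≤ ((M ^ k) *ᵥ u) j := ih.2
          have h3 : (M *ᵥ fun j => μ ^ k * u j) i ≤ (M *ᵥ ((M ^ k) *ᵥ u)) i := by
            simp only [Matrix.mulVec, dotProduct]
            exact Finset.sum_le_sum fun j _ => mul_le_mul_of_nonneg_left (h2 j) (hM i j)
          refine le_trans ?_ h3
          have h4 : (M *ᵥ fun j => μ ^ k * u j) i = μ ^ k * (M *ᵥ u) i := by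
            simp only [Matrix.mulVec, dotProduct, Finset.mul_sum]
            exact Finset.sum_congr rfl fun j _ => by ring
          rw [h4, pow_succ']
          calc μ * μ ^ k * u i = μ ^ k * (μ * u i) := by ring
            _ ≤ μ ^ k * (M *ᵥ u) i := by
                exact mul_le_mul_of_nonneg_left (hMu i) (pow_nonneg hμ k)
  -- spectral radius bound
  have hρ : spectralRadius ℂ Mc ≤ ENNReal.ofReal (specRad M) := by
    rw [spectralRadius]
    refine iSup₂_le fun z hz => ?_
    have h1 : ‖z‖ ≤ specRad M :=
      le_csSup (specRad_bddAbove M) ⟨z, hz, rfl⟩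
    rw [← ENNReal.ofReal_coe_nnreal, coe_nnnorm]
    exact ENNReal.ofReal_le_ofReal h1
  set r := (specRad M + μ) / 2 with hrdef
  have hr1 : specRad M < r := by
    rw [hrdef]; linarith
  have hr2 : r < μ := by rw [hrdef]; linarith
  have hr0 : 0 < r := lt_of_le_of_lt (specRad_nonneg M) hr1
  have hev : ∀ᶠ k : ℕ in atTop, (‖Mc ^ k‖₊ : ℝ≥0∞) ^ (1/(k:ℝ)) < ENNReal.ofReal r := by
    refine (spectrum.pow_nnnorm_pow_one_div_tendsto_nhds_spectralRadius Mc).eventually_lt_const ?_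
    exact lt_of_le_of_lt hρ ((ENNReal.ofReal_lt_ofReal_iff hr0).mpr hr1)
  -- pick witness index
  have hiex : ∃ i, 0 < u i := by
    by_contra h
    push_neg at h
    exact hune (funext fun i => le_antisymm (h i) (hu i))
  obtain ⟨i₀, hi₀⟩ := hiex
  set S := ∑ j, u j with hSdef
  have hS0 : 0 < S := Finset.sum_pos' (fun j _ => hu j) ⟨i₀, Finset.mem_univ i₀, hi₀⟩
  -- big-k bound
  have hbig : ∀ᶠ k : ℕ in atTop, S / u i₀ < (μ / r) ^ k := by
    have h1 : 1 < μ / r := (one_lt_div hr0).mpr hr2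
    exact (tendsto_pow_atTop_atTop_of_one_lt h1).eventually_gt_atTop _
  have hcontr : ∀ᶠ k : ℕ in atTop, False := by
    filter_upwards [hev, hbig, eventually_ge_atTop 1] with k hk1 hk2 hk3
    -- from hk1 : nnnorm bound
    have hkR : (0:ℝ) < (k:ℝ) := by exact_mod_cast hk3
    have hn1 : (‖Mc ^ k‖₊ : ℝ≥0∞) < (ENNReal.ofReal r) ^ (k:ℝ) := by
      have h := ENNReal.rpow_lt_rpow hk1 hkR
      rwa [← ENNReal.rpow_mul, one_div_mul_cancel hkR.ne', ENNReal.rpow_one] at h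
    have hn2 : ‖Mc ^ k‖ < r ^ k := by
      have he : (ENNReal.ofReal r) ^ (k:ℝ) = ENNReal.ofReal (r ^ k) := by
        rw [← Real.rpow_natCast r k]
        first
        | rw [ENNReal.ofReal_rpow_of_pos hr0]
        | rw [← ENNReal.ofReal_rpow_of_pos hr0]
      rw [he] at hn1
      have h5 := (ENNReal.lt_ofReal_iff_toReal_lt (ENNReal.coe_ne_top)).mp hn1
      simpa using h5
    have hMk : (M ^ k).map Complex.ofReal = Mc ^ k := map_pow' M k
    have hchain : μ ^ k * u i₀ ≤ r ^ k * S := by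
      have c1 : μ ^ k * u i₀ ≤ ((M ^ k) *ᵥ u) i₀ := (hpow k).2 i₀
      have c2 : ((M ^ k) *ᵥ u) i₀ ≤ (∑ j, (M ^ k) i₀ j) * S := by
        simp only [Matrix.mulVec, dotProduct, Finset.sum_mul]
        refine Finset.sum_le_sum fun j _ => ?_
        refine mul_le_mul_of_nonneg_left ?_ ((hpow k).1 i₀ j)
        exact Finset.single_le_sum (fun l _ => hu l) (Finset.mem_univ j)
      have c3 : (∑ j, (M ^ k) i₀ j) * S ≤ ‖Mc ^ k‖ * S := by
        refine mul_le_mul_of_nonneg_right ?_ hS0.le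
        rw [← hMk]
        exact rowsum_le_norm _ ((hpow k).1) i₀
      have c4 : ‖Mc ^ k‖ * S ≤ r ^ k * S := mul_le_mul_of_nonneg_right hn2.le hS0.le
      linarith
    have hrk : (0:ℝ) < r ^ k := pow_pos hr0 k
    have hfin : (μ / r) ^ k ≤ S / u i₀ := by
      rw [div_pow, div_le_div_iff₀ hrk hi₀]
      calc μ ^ k * u i₀ ≤ r ^ k * S := hchain
        _ = S * r ^ k := by ring
    exact absurd hfin (not_le.mpr hk2)
  obtain ⟨k, hk⟩ := hcontr.exists
  exact hk

lemma ext_mulVec {a b : Type*} [Fintype b] [DecidableEq b] {M N : Matrix a b ℝ}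
    (h : ∀ v, M *ᵥ v = N *ᵥ v) : M = N := by
  ext i j
  have := congrFun (h (Pi.single j 1)) i
  simpa using this

lemma key {m n : ℕ} (A P₂ Ahat N : Matrix (Fin m) (Fin n) ℝ)
    (X₂ G : Matrix (Fin n) (Fin m) ℝ) (U : Matrix (Fin m) (Fin m) ℝ)
    (hX₂ : IsMP P₂ X₂) (hG : IsMP Ahat G) (hU : IsUnit U) (hAhat : Ahat = U * A)
    (hsplit : Ahat = P₂ - N)
    (hrange : LinearMap.range (P₂).mulVecLin = LinearMap.range (A).mulVecLin)
    (hker : LinearMap.ker (P₂).mulVecLin = LinearMap.ker (A).mulVecLin)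
    (hstab : ∀ v : Fin m → ℝ, v ∈ LinearMap.range (A).mulVecLin →
      U *ᵥ v ∈ LinearMap.range (A).mulVecLin) :
    (1 - X₂ * N) * (1 + G * N) = 1 := by
  set E := X₂ * P₂ with hEdef
  set F := P₂ * X₂ with hFdef
  have hEsym : Eᵀ = E := hX₂.2.2.2
  have hFsym : Fᵀ = F := hX₂.2.2.1
  have hP2E : P₂ * (1 - E) = 0 := by
    rw [Matrix.mul_sub, Matrix.mul_one, hEdef, ← Matrix.mul_assoc, hX₂.1, sub_self]
  -- s1 : A * (1 - E) = 0
  have s1 : A * (1 - E) = 0 := by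
    apply ext_mulVec
    intro v
    have h1 : P₂ *ᵥ ((1 - E) *ᵥ v) = 0 := by
      rw [Matrix.mulVec_mulVec, hP2E, Matrix.zero_mulVec]
    have h2 : (1 - E) *ᵥ v ∈ LinearMap.ker (P₂).mulVecLin := by
      simpa [Matrix.mulVecLin_apply] using h1
    rw [hker] at h2
    have h3 : A *ᵥ ((1 - E) *ᵥ v) = 0 := by
      simpa [Matrix.mulVecLin_apply] using h2
    rw [← Matrix.mulVec_mulVec, h3, Matrix.zero_mulVec]
  -- s2 : E * Aᵀ = Aᵀ
  have s2 : E * Aᵀ = Aᵀ := by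
    have h1 := congrArg Matrix.transpose s1
    rw [Matrix.transpose_mul, Matrix.transpose_zero, Matrix.transpose_sub,
      Matrix.transpose_one, hEsym, Matrix.sub_mul, Matrix.one_mul, sub_eq_zero] at h1
    exact h1.symm
  -- s3 : E * G = G
  have hGsym : (G * Ahat)ᵀ = G * Ahat := hG.2.2.2
  have hGfact : G = Ahatᵀ * (Gᵀ * G) := by
    calc G = G * Ahat * G := hG.2.1.symm
      _ = (G * Ahat)ᵀ * G := by rw [hGsym]
      _ = Ahatᵀ * Gᵀ * G := by rw [Matrix.transpose_mul]
      _ = Ahatᵀ * (Gᵀ * G) := by rw [Matrix.mul_assoc]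
  have hEAhatT : E * Ahatᵀ = Ahatᵀ := by
    rw [hAhat, Matrix.transpose_mul, ← Matrix.mul_assoc, s2]
  have s3 : E * G = G := by
    rw [hGfact, ← Matrix.mul_assoc, hEAhatT]
  -- s4 : F fixes range A
  have hFfix : ∀ v : Fin m → ℝ, v ∈ LinearMap.range (A).mulVecLin → F *ᵥ v = v := by
    intro v hv
    rw [← hrange] at hv
    obtain ⟨w, hw⟩ := hv
    rw [Matrix.mulVecLin_apply] at hw
    rw [← hw, Matrix.mulVec_mulVec, hFdef, hX₂.1]
  -- s5 : F * Ahat = Ahat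
  have s5 : F * Ahat = Ahat := by
    apply ext_mulVec
    intro v
    rw [← Matrix.mulVec_mulVec]
    refine hFfix _ ?_
    rw [hAhat, ← Matrix.mulVec_mulVec]
    exact hstab _ ⟨v, by rw [Matrix.mulVecLin_apply]⟩
  -- s6 : range A ⊆ range Ahat
  have s6 : ∀ x : Fin n → ℝ, ∃ w, A *ᵥ x = Ahat *ᵥ w := by
    set V := LinearMap.range (A).mulVecLin with hVdef
    have hstab' : ∀ x ∈ V, (U).mulVecLin x ∈ V := by
      intro x hx
      rw [Matrix.mulVecLin_apply]
      exact hstab x hx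
    set f : V →ₗ[ℝ] V := ((U).mulVecLin).restrict hstab' with hfdef
    obtain ⟨uu, huu⟩ := hU
    have hUiU : (↑uu⁻¹ : Matrix (Fin m) (Fin m) ℝ) * U = 1 := by
      rw [← huu]; exact uu.inv_mul
    have hinj : Function.Injective f := by
      intro x y hxy
      have h1 : U *ᵥ (x : Fin m → ℝ) = U *ᵥ (y : Fin m → ℝ) := by
        have := congrArg (Subtype.val) hxy
        simpa [hfdef, LinearMap.restrict_apply, Matrix.mulVecLin_apply] using this
      have h2 : (x : Fin m → ℝ) = (y : Fin m → ℝ) := by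
        have h3 := congrArg (fun z => (↑uu⁻¹ : Matrix (Fin m) (Fin m) ℝ) *ᵥ z) h1
        simp only [Matrix.mulVec_mulVec] at h3
        rwa [hUiU, Matrix.one_mulVec, Matrix.one_mulVec] at h3
      exact Subtype.ext h2
    have hsurj : Function.Surjective f := (LinearMap.injective_iff_surjective).mp hinj
    intro x
    obtain ⟨⟨v, hv⟩, hfv⟩ := hsurj ⟨A *ᵥ x, ⟨x, by rw [Matrix.mulVecLin_apply]⟩⟩
    obtain ⟨w, hw⟩ := hv
    rw [Matrix.mulVecLin_apply] at hw
    refine ⟨w, ?_⟩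
    have h1 : U *ᵥ v = A *ᵥ x := by
      have := congrArg (Subtype.val) hfv
      simpa [hfdef, LinearMap.restrict_apply, Matrix.mulVecLin_apply] using this
    rw [hAhat, ← Matrix.mulVec_mulVec, hw, h1]
  -- s7 : Ahat * G = F
  have hQsym : (Ahat * G)ᵀ = Ahat * G := hG.2.2.1
  have hFQ : F * (Ahat * G) = Ahat * G := by rw [← Matrix.mul_assoc, s5]
  have hQF : (Ahat * G) * F = F := by
    apply ext_mulVec
    intro v
    have h1 : F *ᵥ v ∈ LinearMap.range (A).mulVecLin := by
      rw [← hrange]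
      exact ⟨X₂ *ᵥ v, by rw [Matrix.mulVecLin_apply, Matrix.mulVec_mulVec]⟩
    obtain ⟨x, hx⟩ := h1
    rw [Matrix.mulVecLin_apply] at hx
    obtain ⟨w, hw⟩ := s6 x
    rw [← Matrix.mulVec_mulVec, ← hx, hw, Matrix.mulVec_mulVec, hG.1]
  have s7 : Ahat * G = F := by
    calc Ahat * G = (Ahat * G)ᵀ := hQsym.symm
      _ = (F * (Ahat * G))ᵀ := by rw [hFQ]
      _ = (Ahat * G)ᵀ * Fᵀ := Matrix.transpose_mul _ _
      _ = (Ahat * G) * F := by rw [hQsym, hFsym]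
      _ = F := hQF
  -- s8 : the inverse identity
  have hN : N = P₂ - Ahat := by rw [hsplit]; abel
  have hTG : (X₂ * N) * G = G - X₂ := by
    have h1 : X₂ * N = E - X₂ * Ahat := by rw [hN, Matrix.mul_sub, hEdef]
    rw [h1, Matrix.sub_mul, s3, Matrix.mul_assoc, s7, hFdef, ← Matrix.mul_assoc, hX₂.2.1]
  have expand : (1 - X₂ * N) * (1 + G * N) =
      1 + G * N - X₂ * N - (X₂ * N) * (G * N) := by noncomm_ring
  rw [expand, show (X₂ * N) * (G * N) = G * N - X₂ * N from by
    rw [← Matrix.mul_assoc, hTG, Matrix.sub_mul]]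
  abel

lemma mulVec_nonneg {a b : Type*} [Fintype b] {M : Matrix a b ℝ} {v : b → ℝ}
    (hM : ∀ i j, 0 ≤ M i j) (hv : ∀ j, 0 ≤ v j) : ∀ i, 0 ≤ (M *ᵥ v) i := by
  intro i
  simp only [Matrix.mulVec, dotProduct]
  exact Finset.sum_nonneg fun j _ => mul_nonneg (hM i j) (hv j)

lemma blockBound {n : ℕ} (hn : 0 < n) (B C T GN : Matrix (Fin n) (Fin n) ℝ)
    (hB : ∀ i j, 0 ≤ B i j) (hC : ∀ i j, 0 ≤ C i j) (hGN : ∀ i j, 0 ≤ GN i j)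
    (hT : B + C = T)
    (hinv : (1 - T) * (1 + GN) = 1) :
    specRad (Matrix.fromBlocks B C 1 0) < 1 := by
  set e : Fin n → ℝ := fun _ => 1 with hedef
  set y : Fin n → ℝ := (1 + GN) *ᵥ e with hydef
  have hy1 : ∀ i, 1 ≤ y i := by
    intro i
    have h1 : y = e + GN *ᵥ e := by
      rw [hydef, Matrix.add_mulVec, Matrix.one_mulVec]
    have h2 : 0 ≤ (GN *ᵥ e) i := mulVec_nonneg hGN (fun j => by norm_num [hedef]) i
    have h3 : y i = 1 + (GN *ᵥ e) i := by rw [h1]; simp [hedef]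
    linarith
  have hy0 : ∀ i, 0 < y i := fun i => lt_of_lt_of_le one_pos (hy1 i)
  have hTy : ∀ i, (T *ᵥ y) i = y i - 1 := by
    have h1 : (1 - T) *ᵥ y = e := by
      rw [hydef, Matrix.mulVec_mulVec, hinv, Matrix.one_mulVec]
    intro i
    have h2 := congrFun h1 i
    rw [Matrix.sub_mulVec, Matrix.one_mulVec] at h2
    have h3 : y i - (T *ᵥ y) i = 1 := h2
    linarith
  have hune : (Finset.univ : Finset (Fin n)).Nonempty := by
    refine ⟨⟨0, hn⟩, Finset.mem_univ _⟩
  obtain ⟨Ymax, hYdef⟩ : ∃ c : ℝ, c = Finset.univ.sup' hune y := ⟨_, rfl⟩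
  have hYge : ∀ i, y i ≤ Ymax := fun i => hYdef ▸ Finset.le_sup' y (Finset.mem_univ i)
  have hY1 : 1 ≤ Ymax := le_trans (hy1 ⟨0, hn⟩) (hYge ⟨0, hn⟩)
  have hY0 : 0 < Ymax := lt_of_lt_of_le one_pos hY1
  obtain ⟨α, hαdef⟩ : ∃ a : ℝ, a = 1 - 1/Ymax := ⟨_, rfl⟩
  have hinvY : 0 < 1/Ymax := by positivity
  have hinvY1 : 1/Ymax ≤ 1 := by rw [div_le_one hY0]; exact hY1
  have hα0 : 0 ≤ α := by rw [hαdef]; linarith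
  have hα1 : α < 1 := by rw [hαdef]; linarith
  have hTyα : ∀ i, (T *ᵥ y) i ≤ α * y i := by
    intro i
    have h1 : y i / Ymax ≤ 1 := (div_le_one hY0).mpr (hYge i)
    have h2 : α * y i = y i - 1/Ymax * y i := by rw [hαdef]; ring
    have h3 : 1/Ymax * y i = y i / Ymax := by ring
    rw [hTy i, h2, h3]
    linarith
  obtain ⟨θ, hθdef⟩ : ∃ t : ℝ, t = Real.sqrt ((1 + α)/2) := ⟨_, rfl⟩
  have hhalf : 0 ≤ (1 + α)/2 := by linarith
  have hθsq : θ^2 = (1 + α)/2 := by rw [hθdef]; exact Real.sq_sqrt hhalf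
  have hθpos : 0 < θ := by rw [hθdef]; exact Real.sqrt_pos.mpr (by linarith)
  have hθlt1 : θ < 1 := by nlinarith
  have hθle1 : θ ≤ 1 := hθlt1.le
  have hαθ : α ≤ θ^2 := by rw [hθsq]; linarith
  have hθinv0 : 0 < θ⁻¹ := inv_pos.mpr hθpos
  have hθinv1 : 1 ≤ θ⁻¹ := by
    rw [le_inv_comm₀ one_pos hθpos]
    simpa using hθle1
  set x : (Fin n ⊕ Fin n) → ℝ := Sum.elim y (θ⁻¹ • y) with hxdef
  have hx : ∀ idx, 0 < x idx := by
    rintro (i | i)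
    · exact hy0 i
    · simp only [hxdef, Sum.elim_inr, Pi.smul_apply, smul_eq_mul]
      exact mul_pos hθinv0 (hy0 i)
  have hW : ∀ i j, 0 ≤ (Matrix.fromBlocks B C (1 : Matrix (Fin n) (Fin n) ℝ) 0) i j := by
    rintro (i | i) (j | j)
    · simpa using hB i j
    · simpa using hC i j
    · simp only [Matrix.fromBlocks_apply₂₁]
      rw [Matrix.one_apply]
      split <;> norm_num
    · simp
  have hWx : ∀ idx, ((Matrix.fromBlocks B C (1 : Matrix (Fin n) (Fin n) ℝ) 0) *ᵥ x) idx
      ≤ θ * x idx := by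
    have hxl : x ∘ Sum.inl = y := rfl
    have hxr : x ∘ Sum.inr = θ⁻¹ • y := rfl
    rintro (i | i)
    · rw [Matrix.fromBlocks_mulVec]
      simp only [Sum.elim_inl, Pi.add_apply, hxl, hxr]
      have hsm : (C *ᵥ (θ⁻¹ • y)) i = θ⁻¹ * (C *ᵥ y) i := by
        rw [Matrix.mulVec_smul]; simp
      rw [hsm]
      have hBy : 0 ≤ (B *ᵥ y) i := mulVec_nonneg hB (fun j => (hy0 j).le) i
      have hCy : 0 ≤ (C *ᵥ y) i := mulVec_nonneg hC (fun j => (hy0 j).le) i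
      have hsum : (B *ᵥ y) i + (C *ᵥ y) i = (T *ᵥ y) i := by
        rw [← hT, Matrix.add_mulVec]; simp
      have step1 : (B *ᵥ y) i + θ⁻¹ * (C *ᵥ y) i ≤ θ⁻¹ * ((B *ᵥ y) i + (C *ᵥ y) i) := by
        nlinarith
      have step2 : θ⁻¹ * ((B *ᵥ y) i + (C *ᵥ y) i) ≤ θ⁻¹ * (α * y i) := by
        apply mul_le_mul_of_nonneg_left _ hθinv0.le
        rw [hsum]; exact hTyα i
      have step3 : θ⁻¹ * (α * y i) ≤ θ * y i := by
        rw [← mul_assoc]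
        apply mul_le_mul_of_nonneg_right _ (hy0 i).le
        rw [inv_mul_le_iff₀ hθpos, ← sq]
        exact hαθ
      have hgoal : θ * x (Sum.inl i) = θ * y i := rfl
      rw [hgoal]
      linarith
    · rw [Matrix.fromBlocks_mulVec]
      simp only [Sum.elim_inr, Pi.add_apply, hxl, hxr, Matrix.one_mulVec, Matrix.zero_mulVec,
        Pi.zero_apply, add_zero]
      have hgoal : θ * x (Sum.inr i) = y i := by
        simp only [hxdef, Sum.elim_inr, Pi.smul_apply, smul_eq_mul, ← mul_assoc]
        rw [mul_inv_cancel₀ hθpos.ne', one_mul]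
      rw [hgoal]
  have hfin := specRad_le (le_of_lt hθpos) hW hx hWx
  linarith

lemma ent_mul_nonneg {a b c : Type*} [Fintype b] {M : Matrix a b ℝ} {N : Matrix b c ℝ}
    (hM : ∀ i j, 0 ≤ M i j) (hN : ∀ i j, 0 ≤ N i j) : ∀ i j, 0 ≤ (M * N) i j := by
  intro i j
  rw [Matrix.mul_apply]
  exact Finset.sum_nonneg fun l _ => mul_nonneg (hM i l) (hN l j)

lemma ent_mul_nonpos {a b c : Type*} [Fintype b] {M : Matrix a b ℝ} {N : Matrix b c ℝ}
    (hM : ∀ i j, 0 ≤ M i j) (hN : ∀ i j, N i j ≤ 0) : ∀ i j, (M * N) i j ≤ 0 := by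
  intro i j
  rw [Matrix.mul_apply]
  exact Finset.sum_nonpos fun l _ => mul_nonpos_of_nonneg_of_nonpos (hM i l) (hN l j)

lemma ent_mul_nonpos' {a b c : Type*} [Fintype b] {M : Matrix a b ℝ} {N : Matrix b c ℝ}
    (hM : ∀ i j, M i j ≤ 0) (hN : ∀ i j, 0 ≤ N i j) : ∀ i j, (M * N) i j ≤ 0 := by
  intro i j
  rw [Matrix.mul_apply]
  exact Finset.sum_nonpos fun l _ => mul_nonpos_of_nonpos_of_nonneg (hM i l) (hN l j)

lemma ent_mul_nonneg' {a b c : Type*} [Fintype b] {M : Matrix a b ℝ} {N : Matrix b c ℝ}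
    (hM : ∀ i j, M i j ≤ 0) (hN : ∀ i j, N i j ≤ 0) : ∀ i j, 0 ≤ (M * N) i j := by
  intro i j
  rw [Matrix.mul_apply]
  refine Finset.sum_nonneg fun l _ => ?_
  have := mul_nonneg (neg_nonneg.mpr (hM i l)) (neg_nonneg.mpr (hN l j))
  nlinarith

lemma mulVec_mono {a b : Type*} [Fintype b] {M M' : Matrix a b ℝ} {u : b → ℝ}
    (h : ∀ i j, M i j ≤ M' i j) (hu : ∀ j, 0 ≤ u j) : ∀ i, (M *ᵥ u) i ≤ (M' *ᵥ u) i := by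
  intro i
  simp only [Matrix.mulVec, dotProduct]
  exact Finset.sum_le_sum fun j _ => mul_le_mul_of_nonneg_right (h i j) (hu j)

lemma fromBlocks_nonneg {n : ℕ} {B C : Matrix (Fin n) (Fin n) ℝ}
    (hB : ∀ i j, 0 ≤ B i j) (hC : ∀ i j, 0 ≤ C i j) :
    ∀ i j, 0 ≤ (Matrix.fromBlocks B C (1 : Matrix (Fin n) (Fin n) ℝ) 0) i j := by
  rintro (i | i) (j | j)
  · simpa using hB i j
  · simpa using hC i j
  · simp only [Matrix.fromBlocks_apply₂₁]
    rw [Matrix.one_apply]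
    split <;> norm_num
  · simp


end ADSAux
open ADSAux in
theorem htads_vs_tgads_comparison {m n : ℕ}
    (A P₁ R₁ S₁ P₂ R₂ S₂ : Matrix (Fin m) (Fin n) ℝ)
    (XA X₁ X₂ Xhat Xcal : Matrix (Fin n) (Fin m) ℝ)
    (hX₁ : IsMP P₁ X₁)
    (hX₂ : IsMP P₂ X₂)
    (hXA : IsMP A XA)
    (hsemi : MatLE 0 XA)
    (hsplit₁ : A = P₁ - R₁ + S₁)
    (hrange₁ : LinearMap.range (P₁).mulVecLin = LinearMap.range (A).mulVecLin)
    (hker₁ : LinearMap.ker (P₁).mulVecLin = LinearMap.ker (A).mulVecLin)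
    (hwr₁a : MatLE 0 X₁)
    (hwr₁b : MatLE 0 (X₁ * R₁))
    (hwr₁c : MatLE (X₁ * S₁) 0)
    (hsplit₂ : A = P₂ - R₂ + S₂)
    (hrange₂ : LinearMap.range (P₂).mulVecLin = LinearMap.range (A).mulVecLin)
    (hker₂ : LinearMap.ker (P₂).mulVecLin = LinearMap.ker (A).mulVecLin)
    (hreg₂a : MatLE 0 X₂)
    (hreg₂b : MatLE 0 R₂)
    (hreg₂c : MatLE S₂ 0)
    (hNS : LinearMap.ker (S₂).mulVecLin = LinearMap.ker (P₂).mulVecLin)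
    (hRS : LinearMap.range (S₂).mulVecLin = LinearMap.range (P₂).mulVecLin)
    (hunitS : IsUnit (1 - S₂ * X₁))
    (hunitR : IsUnit (1 + R₂ * X₁))
    (hXhat : IsMP ((1 - S₂ * X₁) * A) Xhat)
    (hXhatpos : MatLE 0 Xhat)
    (hXcal : IsMP ((1 + R₂ * X₁) * A) Xcal)
    (hXcalpos : MatLE 0 Xcal)
    (hc1 : MatLE (X₂ * (R₂ - S₂ * X₁ * R₁)) (X₂ * (R₂ * X₁ * R₁ - S₂)))
    (hc2 : MatLE (X₂ * ((1 - S₂ * X₁) * A)) (X₂ * ((1 + R₂ * X₁) * A)))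
    : specRad (Matrix.fromBlocks (X₂ * R₂ * X₁ * R₁ - X₂ * S₂) (-(X₂ * R₂ * X₁ * S₁)) 1 0) ≤ specRad (Matrix.fromBlocks (X₂ * R₂ - X₂ * S₂ * X₁ * R₁) (X₂ * S₂ * X₁ * S₁) 1 0) ∧ specRad (Matrix.fromBlocks (X₂ * R₂ - X₂ * S₂ * X₁ * R₁) (X₂ * S₂ * X₁ * S₁) 1 0) < 1 := by
  rcases Nat.eq_zero_or_pos n with hn | hn
  · -- degenerate case n = 0
    subst hn
    have hempty : ∀ (M : Matrix (Fin 0 ⊕ Fin 0) (Fin 0 ⊕ Fin 0) ℝ), specRad M = 0 := by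
      intro M
      haveI : IsEmpty (Fin 0 ⊕ Fin 0) := by infer_instance
      haveI : Subsingleton (Matrix (Fin 0 ⊕ Fin 0) (Fin 0 ⊕ Fin 0) ℂ) :=
        ⟨fun a b => by ext i j; exact (IsEmpty.false i).elim⟩
      have hs : spectrum ℂ (M.map Complex.ofReal) = ∅ := by
        ext z
        simp only [Set.mem_empty_iff_false, iff_false]
        intro hz
        exact (spectrum.mem_iff.mp hz) (isUnit_of_subsingleton _)
      rw [specRad, hs, Set.image_empty, Real.sSup_empty]
    rw [hempty, hempty]
    norm_num
  -- main case
  set Ah := (1 - S₂ * X₁) * A with hAh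
  set Ac := (1 + R₂ * X₁) * A with hAc
  set Nh := R₂ - S₂ * X₁ * R₁ + S₂ * X₁ * S₁ with hNh
  set Nc := R₂ * X₁ * R₁ - S₂ - R₂ * X₁ * S₁ with hNc
  set B := X₂ * R₂ - X₂ * S₂ * X₁ * R₁ with hB
  set C := X₂ * S₂ * X₁ * S₁ with hC
  set B' := X₂ * R₂ * X₁ * R₁ - X₂ * S₂ with hB'
  set C' := -(X₂ * R₂ * X₁ * S₁) with hC'
  have hR2eq : R₂ = P₂ + S₂ - A := by rw [hsplit₂]; abel
  -- kernel transfer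
  have kerP₁ : ∀ w, P₁ *ᵥ w = 0 → (S₂ *ᵥ w = 0 ∧ R₂ *ᵥ w = 0) := by
    intro w hw
    have hA0 : A *ᵥ w = 0 := by
      have h1 : w ∈ LinearMap.ker (P₁).mulVecLin := by
        simpa [Matrix.mulVecLin_apply] using hw
      rw [hker₁] at h1
      simpa [Matrix.mulVecLin_apply] using h1
    have hP2 : P₂ *ᵥ w = 0 := by
      have h1 : w ∈ LinearMap.ker (A).mulVecLin := by
        simpa [Matrix.mulVecLin_apply] using hA0
      rw [← hker₂] at h1
      simpa [Matrix.mulVecLin_apply] using h1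
    have hS2 : S₂ *ᵥ w = 0 := by
      have h1 : w ∈ LinearMap.ker (P₂).mulVecLin := by
        simpa [Matrix.mulVecLin_apply] using hP2
      rw [← hNS] at h1
      simpa [Matrix.mulVecLin_apply] using h1
    have hR2 : R₂ *ᵥ w = 0 := by
      rw [hR2eq, Matrix.sub_mulVec, Matrix.add_mulVec, hP2, hS2, hA0]
      simp
    exact ⟨hS2, hR2⟩
  have hP1ann : P₁ * (1 - X₁ * P₁) = 0 := by
    rw [Matrix.mul_sub, Matrix.mul_one, ← Matrix.mul_assoc, hX₁.1, sub_self]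
  have I1 : S₂ * X₁ * P₁ = S₂ := by
    have h0 : S₂ * (1 - X₁ * P₁) = 0 := by
      apply ext_mulVec
      intro v
      have h1 : P₁ *ᵥ ((1 - X₁ * P₁) *ᵥ v) = 0 := by
        rw [Matrix.mulVec_mulVec, hP1ann, Matrix.zero_mulVec]
      rw [← Matrix.mulVec_mulVec, (kerP₁ _ h1).1, Matrix.zero_mulVec]
    have h3 : S₂ * (1 - X₁ * P₁) = S₂ - S₂ * X₁ * P₁ := by
      rw [Matrix.mul_sub, Matrix.mul_one, ← Matrix.mul_assoc]
    rw [h3] at h0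
    exact (sub_eq_zero.mp h0).symm
  have I2 : R₂ * X₁ * P₁ = R₂ := by
    have h0 : R₂ * (1 - X₁ * P₁) = 0 := by
      apply ext_mulVec
      intro v
      have h1 : P₁ *ᵥ ((1 - X₁ * P₁) *ᵥ v) = 0 := by
        rw [Matrix.mulVec_mulVec, hP1ann, Matrix.zero_mulVec]
      rw [← Matrix.mulVec_mulVec, (kerP₁ _ h1).2, Matrix.zero_mulVec]
    have h3 : R₂ * (1 - X₁ * P₁) = R₂ - R₂ * X₁ * P₁ := by
      rw [Matrix.mul_sub, Matrix.mul_one, ← Matrix.mul_assoc]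
    rw [h3] at h0
    exact (sub_eq_zero.mp h0).symm
  -- splittings of Ah and Ac
  have hSA : S₂ * X₁ * A = S₂ - S₂ * X₁ * R₁ + S₂ * X₁ * S₁ := by
    conv_lhs => rw [hsplit₁]
    rw [Matrix.mul_add, Matrix.mul_sub, I1]
  have hRA : R₂ * X₁ * A = R₂ - R₂ * X₁ * R₁ + R₂ * X₁ * S₁ := by
    conv_lhs => rw [hsplit₁]
    rw [Matrix.mul_add, Matrix.mul_sub, I2]
  have hAhsplit : Ah = P₂ - Nh := by
    rw [hAh, Matrix.sub_mul, Matrix.one_mul, hSA, hNh]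
    conv_lhs => rw [hsplit₂]
    abel
  have hAcsplit : Ac = P₂ - Nc := by
    rw [hAc, Matrix.add_mul, Matrix.one_mul, hRA, hNc]
    conv_lhs => rw [hsplit₂]
    abel
  -- range facts
  have hrangeA : ∀ w, A *ᵥ w ∈ LinearMap.range (A).mulVecLin :=
    fun w => ⟨w, by simp [Matrix.mulVecLin_apply]⟩
  have hrangeP : ∀ w, P₂ *ᵥ w ∈ LinearMap.range (A).mulVecLin := by
    intro w
    have h1 : P₂ *ᵥ w ∈ LinearMap.range (P₂).mulVecLin := ⟨w, by simp [Matrix.mulVecLin_apply]⟩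
    rwa [hrange₂] at h1
  have hrangeS : ∀ w, S₂ *ᵥ w ∈ LinearMap.range (A).mulVecLin := by
    intro w
    have h1 : S₂ *ᵥ w ∈ LinearMap.range (S₂).mulVecLin := ⟨w, by simp [Matrix.mulVecLin_apply]⟩
    rwa [hRS, hrange₂] at h1
  have hrangeR : ∀ w, R₂ *ᵥ w ∈ LinearMap.range (A).mulVecLin := by
    intro w
    rw [hR2eq, Matrix.sub_mulVec, Matrix.add_mulVec]
    exact Submodule.sub_mem _ (Submodule.add_mem _ (hrangeP w) (hrangeS w)) (hrangeA w)
  have hstabS : ∀ v ∈ LinearMap.range (A).mulVecLin,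
      (1 - S₂ * X₁) *ᵥ v ∈ LinearMap.range (A).mulVecLin := by
    intro v hv
    rw [Matrix.sub_mulVec, Matrix.one_mulVec, ← Matrix.mulVec_mulVec]
    exact Submodule.sub_mem _ hv (hrangeS _)
  have hstabR : ∀ v ∈ LinearMap.range (A).mulVecLin,
      (1 + R₂ * X₁) *ᵥ v ∈ LinearMap.range (A).mulVecLin := by
    intro v hv
    rw [Matrix.add_mulVec, Matrix.one_mulVec, ← Matrix.mulVec_mulVec]
    exact Submodule.add_mem _ hv (hrangeR _)
  -- the inverse identities
  have hinvh : (1 - X₂ * Nh) * (1 + Xhat * Nh) = 1 :=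
    key A P₂ Ah Nh X₂ Xhat (1 - S₂ * X₁) hX₂ hXhat hunitS hAh hAhsplit hrange₂ hker₂ hstabS
  have hinvc : (1 - X₂ * Nc) * (1 + Xcal * Nc) = 1 :=
    key A P₂ Ac Nc X₂ Xcal (1 + R₂ * X₁) hX₂ hXcal hunitR hAc hAcsplit hrange₂ hker₂ hstabR
  -- entrywise positivity
  have hX₂S₂ : ∀ i j, (X₂ * S₂) i j ≤ 0 := ent_mul_nonpos hreg₂a hreg₂c
  have hX₂R₂ : ∀ i j, 0 ≤ (X₂ * R₂) i j := ent_mul_nonneg hreg₂a hreg₂b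
  have hBpos : ∀ i j, 0 ≤ B i j := by
    intro i j
    have e1 : X₂ * S₂ * X₁ * R₁ = (X₂ * S₂) * (X₁ * R₁) := by
      rw [Matrix.mul_assoc (X₂ * S₂) X₁ R₁]
    have h1 : (X₂ * S₂ * X₁ * R₁) i j ≤ 0 := by
      rw [e1]; exact ent_mul_nonpos' hX₂S₂ hwr₁b i j
    have h2 := hX₂R₂ i j
    rw [hB]
    simp only [Matrix.sub_apply]
    linarith
  have hCpos : ∀ i j, 0 ≤ C i j := by
    intro i j
    have e1 : X₂ * S₂ * X₁ * S₁ = (X₂ * S₂) * (X₁ * S₁) := by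
      rw [Matrix.mul_assoc (X₂ * S₂) X₁ S₁]
    rw [hC, e1]
    exact ent_mul_nonneg' hX₂S₂ hwr₁c i j
  have hB'pos : ∀ i j, 0 ≤ B' i j := by
    intro i j
    have e1 : X₂ * R₂ * X₁ * R₁ = (X₂ * R₂) * (X₁ * R₁) := by
      rw [Matrix.mul_assoc (X₂ * R₂) X₁ R₁]
    have h1 : 0 ≤ (X₂ * R₂ * X₁ * R₁) i j := by
      rw [e1]; exact ent_mul_nonneg hX₂R₂ hwr₁b i j
    have h2 := hX₂S₂ i j
    rw [hB']
    simp only [Matrix.sub_apply]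
    linarith
  have hC'pos : ∀ i j, 0 ≤ C' i j := by
    intro i j
    have e1 : X₂ * R₂ * X₁ * S₁ = (X₂ * R₂) * (X₁ * S₁) := by
      rw [Matrix.mul_assoc (X₂ * R₂) X₁ S₁]
    have h1 : (X₂ * R₂ * X₁ * S₁) i j ≤ 0 := by
      rw [e1]; exact ent_mul_nonpos hX₂R₂ hwr₁c i j
    rw [hC']
    simp only [Matrix.neg_apply]
    linarith
  have hNhpos : ∀ i j, 0 ≤ Nh i j := by
    intro i j
    have e1 : S₂ * X₁ * R₁ = S₂ * (X₁ * R₁) := Matrix.mul_assoc S₂ X₁ R₁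
    have e2 : S₂ * X₁ * S₁ = S₂ * (X₁ * S₁) := Matrix.mul_assoc S₂ X₁ S₁
    have h1 : (S₂ * X₁ * R₁) i j ≤ 0 := by rw [e1]; exact ent_mul_nonpos' hreg₂c hwr₁b i j
    have h2 : 0 ≤ (S₂ * X₁ * S₁) i j := by rw [e2]; exact ent_mul_nonneg' hreg₂c hwr₁c i j
    have h3 := hreg₂b i j
    rw [hNh]
    simp only [Matrix.add_apply, Matrix.sub_apply]
    simp only [Matrix.zero_apply] at h3
    linarith
  have hNcpos : ∀ i j, 0 ≤ Nc i j := by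
    intro i j
    have e1 : R₂ * X₁ * R₁ = R₂ * (X₁ * R₁) := Matrix.mul_assoc R₂ X₁ R₁
    have e2 : R₂ * X₁ * S₁ = R₂ * (X₁ * S₁) := Matrix.mul_assoc R₂ X₁ S₁
    have h1 : 0 ≤ (R₂ * X₁ * R₁) i j := by rw [e1]; exact ent_mul_nonneg hreg₂b hwr₁b i j
    have h2 : (R₂ * X₁ * S₁) i j ≤ 0 := by rw [e2]; exact ent_mul_nonpos hreg₂b hwr₁c i j
    have h3 := hreg₂c i j
    rw [hNc]
    simp only [Matrix.sub_apply]
    simp only [Matrix.zero_apply] at h3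
    linarith
  have hGNh : ∀ i j, 0 ≤ (Xhat * Nh) i j := ent_mul_nonneg hXhatpos hNhpos
  have hGNc : ∀ i j, 0 ≤ (Xcal * Nc) i j := ent_mul_nonneg hXcalpos hNcpos
  have a1 : X₂ * (S₂ * X₁ * R₁) = X₂ * S₂ * X₁ * R₁ := by
    rw [← Matrix.mul_assoc, ← Matrix.mul_assoc]
  have a2 : X₂ * (S₂ * X₁ * S₁) = X₂ * S₂ * X₁ * S₁ := by
    rw [← Matrix.mul_assoc, ← Matrix.mul_assoc]
  have a3 : X₂ * (R₂ * X₁ * R₁) = X₂ * R₂ * X₁ * R₁ := by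
    rw [← Matrix.mul_assoc, ← Matrix.mul_assoc]
  have a4 : X₂ * (R₂ * X₁ * S₁) = X₂ * R₂ * X₁ * S₁ := by
    rw [← Matrix.mul_assoc, ← Matrix.mul_assoc]
  have hBCT : B + C = X₂ * Nh := by
    rw [hB, hC, hNh, Matrix.mul_add, Matrix.mul_sub, a1, a2]
  have hBCT' : B' + C' = X₂ * Nc := by
    rw [hB', hC', hNc, Matrix.mul_sub, Matrix.mul_sub, a3, a4]
    abel
  -- convergence of both
  have hless : specRad (Matrix.fromBlocks B C 1 0) < 1 :=
    blockBound hn B C (X₂ * Nh) (Xhat * Nh) hBpos hCpos hGNh hBCT hinvh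
  have hless' : specRad (Matrix.fromBlocks B' C' 1 0) < 1 :=
    blockBound hn B' C' (X₂ * Nc) (Xcal * Nc) hB'pos hC'pos hGNc hBCT' hinvc
  -- entrywise comparisons from hc1 and hc2
  have hBB' : ∀ i j, B i j ≤ B' i j := by
    have e1 : X₂ * (R₂ - S₂ * X₁ * R₁) = B := by
      rw [hB, Matrix.mul_sub, a1]
    have e2 : X₂ * (R₂ * X₁ * R₁ - S₂) = B' := by
      rw [hB', Matrix.mul_sub, a3]
    intro i j
    have := hc1 i j
    rwa [e1, e2] at this
  have hsum : ∀ i j, B' i j + C' i j ≤ B i j + C i j := by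
    have h1 : Nh = P₂ - Ah := by rw [hAhsplit]; abel
    have h2 : Nc = P₂ - Ac := by rw [hAcsplit]; abel
    have hTTdiff : X₂ * Nh - X₂ * Nc = X₂ * Ac - X₂ * Ah := by
      rw [h1, h2, Matrix.mul_sub, Matrix.mul_sub]
      abel
    intro i j
    have d1 : (X₂ * Nh) i j - (X₂ * Nc) i j = (X₂ * Ac) i j - (X₂ * Ah) i j := by
      have := congrFun (congrFun hTTdiff i) j
      simpa [Matrix.sub_apply] using this
    have d2 : (X₂ * Ah) i j ≤ (X₂ * Ac) i j := hc2 i j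
    have d3 : B i j + C i j = (X₂ * Nh) i j := by
      have := congrFun (congrFun hBCT i) j
      simpa [Matrix.add_apply] using this
    have d4 : B' i j + C' i j = (X₂ * Nc) i j := by
      have := congrFun (congrFun hBCT' i) j
      simpa [Matrix.add_apply] using this
    linarith
  refine ⟨?_, hless⟩
  -- comparison of spectral radii
  refine Real.sSup_le ?_ (specRad_nonneg _)
  rintro r ⟨z, hz, rfl⟩
  by_cases hzz : ‖z‖ = 0
  · exact le_trans (le_of_eq hzz) (specRad_nonneg _)
  have hμpos : 0 < ‖z‖ := lt_of_le_of_ne (norm_nonneg z) (Ne.symm hzz)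
  have hμlt1 : ‖z‖ < 1 :=
    lt_of_le_of_lt (le_csSup (specRad_bddAbove _) ⟨z, hz, rfl⟩) hless'
  obtain ⟨v, hv0, hv⟩ := exists_eigenvector hz
  set vl : Fin n → ℂ := fun i => v (Sum.inl i) with hvl
  set vr : Fin n → ℂ := fun i => v (Sum.inr i) with hvr
  have hmap : (Matrix.fromBlocks B' C' (1 : Matrix (Fin n) (Fin n) ℝ) 0).map Complex.ofReal
      = Matrix.fromBlocks (B'.map Complex.ofReal) (C'.map Complex.ofReal) 1 0 := by
    rw [Matrix.fromBlocks_map, Matrix.map_one _ Complex.ofReal_zero Complex.ofReal_one,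
      Matrix.map_zero _ Complex.ofReal_zero]
  have hveq : v = Sum.elim vl vr := by
    funext idx
    cases idx <;> rfl
  rw [hmap, hveq, Matrix.fromBlocks_mulVec] at hv
  have hEq1 : ∀ i, (B'.map Complex.ofReal *ᵥ vl) i + (C'.map Complex.ofReal *ᵥ vr) i
      = z * vl i := by
    intro i
    have h1 := congrFun hv (Sum.inl i)
    simpa using h1
  have hEq2 : ∀ i, vl i = z * vr i := by
    intro i
    have h1 := congrFun hv (Sum.inr i)
    simpa using h1
  have hvr0 : vr ≠ 0 := by
    intro h
    apply hv0
    rw [hveq]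
    funext idx
    cases idx with
    | inl i =>
        have h1 := hEq2 i
        rw [h] at h1
        simpa using h1
    | inr i => rw [h]; rfl
  set u : Fin n → ℝ := fun i => ‖vr i‖ with hu
  have hu0 : ∀ i, 0 ≤ u i := fun i => norm_nonneg _
  have hune2 : u ≠ 0 := by
    intro h
    apply hvr0
    funext i
    have h1 := congrFun h i
    simpa [hu] using (norm_eq_zero.mp (by simpa [hu] using h1))
  have hquad : ∀ i, ‖z‖ ^ 2 * u i
      ≤ ‖z‖ * (B' *ᵥ u) i + (C' *ᵥ u) i := by
    intro i
    have hvlr : vl = z • vr := funext fun i => hEq2 i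
    have h1 : z • (B'.map Complex.ofReal *ᵥ vr) i + (C'.map Complex.ofReal *ᵥ vr) i
        = z * (z * vr i) := by
      have h2 := hEq1 i
      rw [hvlr] at h2
      rw [Matrix.mulVec_smul] at h2
      simpa using h2
    have h3 : ‖z * (z * vr i)‖ = ‖z‖ ^ 2 * u i := by
      simp [hu, norm_mul]; ring
    have h4 : ‖z • (B'.map Complex.ofReal *ᵥ vr) i
        + (C'.map Complex.ofReal *ᵥ vr) i‖
        ≤ ‖z‖ * (B' *ᵥ u) i + (C' *ᵥ u) i := by
      refine le_trans (norm_add_le _ _) ?_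
      have h5 : ‖z • (B'.map Complex.ofReal *ᵥ vr) i‖
          ≤ ‖z‖ * (B' *ᵥ u) i := by
        simp only [Pi.smul_apply, smul_eq_mul, norm_mul]
        exact mul_le_mul_of_nonneg_left (abs_mulVec_le hB'pos vr i) (norm_nonneg z)
      have h6 : ‖(C'.map Complex.ofReal *ᵥ vr) i‖ ≤ (C' *ᵥ u) i :=
        abs_mulVec_le hC'pos vr i
      exact add_le_add h5 h6
    calc ‖z‖ ^ 2 * u i = ‖z * (z * vr i)‖ := h3.symm
      _ = ‖z • (B'.map Complex.ofReal *ᵥ vr) i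
            + (C'.map Complex.ofReal *ᵥ vr) i‖ := by rw [h1]
      _ ≤ ‖z‖ * (B' *ᵥ u) i + (C' *ᵥ u) i := h4
  -- build the test vector for the lower bound on specRad W
  set μ := ‖z‖ with hμ
  set U : (Fin n ⊕ Fin n) → ℝ := Sum.elim u (μ⁻¹ • u) with hU
  have hU0 : ∀ idx, 0 ≤ U idx := by
    rintro (i | i)
    · exact hu0 i
    · simp only [hU, Sum.elim_inr, Pi.smul_apply, smul_eq_mul]
      exact mul_nonneg (inv_nonneg.mpr hμpos.le) (hu0 i)
  have hUne : U ≠ 0 := by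
    intro h
    apply hune2
    funext i
    have h1 := congrFun h (Sum.inl i)
    simpa [hU] using h1
  have hμinv1 : 1 ≤ μ⁻¹ := by
    rw [le_inv_comm₀ one_pos hμpos]
    simpa using hμlt1.le
  have hWU : ∀ idx, μ * U idx ≤ ((Matrix.fromBlocks B C (1 : Matrix (Fin n) (Fin n) ℝ) 0) *ᵥ U) idx := by
    have hUl : U ∘ Sum.inl = u := rfl
    have hUr : U ∘ Sum.inr = μ⁻¹ • u := rfl
    rintro (i | i)
    · rw [Matrix.fromBlocks_mulVec]
      simp only [Sum.elim_inl, Pi.add_apply, hUl, hUr]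
      have hsm : (C *ᵥ (μ⁻¹ • u)) i = μ⁻¹ * (C *ᵥ u) i := by
        rw [Matrix.mulVec_smul]; simp
      rw [hsm]
      have hUinl : U (Sum.inl i) = u i := rfl
      rw [hUinl]
      -- k1 : μ * u i ≤ (B' *ᵥ u) i + μ⁻¹ * (C' *ᵥ u) i
      have k1 : μ * u i ≤ (B' *ᵥ u) i + μ⁻¹ * (C' *ᵥ u) i := by
        have q := hquad i
        have q2 : μ⁻¹ * (μ ^ 2 * u i) ≤ μ⁻¹ * (μ * (B' *ᵥ u) i + (C' *ᵥ u) i) :=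
          mul_le_mul_of_nonneg_left q (inv_nonneg.mpr hμpos.le)
        have q3 : μ⁻¹ * (μ ^ 2 * u i) = μ * u i := by
          field_simp
        have q4 : μ⁻¹ * (μ * (B' *ᵥ u) i + (C' *ᵥ u) i)
            = (B' *ᵥ u) i + μ⁻¹ * (C' *ᵥ u) i := by
          field_simp
        rw [q3, q4] at q2
        exact q2
      -- k2 : comparison step
      have l0 : (B *ᵥ u) i ≤ (B' *ᵥ u) i := mulVec_mono hBB' hu0 i
      have l1 : (B' *ᵥ u) i + (C' *ᵥ u) i ≤ (B *ᵥ u) i + (C *ᵥ u) i := by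
        have h1 : ((B' + C') *ᵥ u) i ≤ ((B + C) *ᵥ u) i :=
          mulVec_mono (fun i j => by
            simpa [Matrix.add_apply] using hsum i j) hu0 i
        rw [Matrix.add_mulVec, Matrix.add_mulVec] at h1
        simpa using h1
      have l2 : 0 ≤ (C *ᵥ u) i - (C' *ᵥ u) i := by linarith
      have l3 : (C *ᵥ u) i - (C' *ᵥ u) i ≤ μ⁻¹ * ((C *ᵥ u) i - (C' *ᵥ u) i) :=
        le_mul_of_one_le_left l2 hμinv1
      rw [mul_sub] at l3
      linarith
    · rw [Matrix.fromBlocks_mulVec]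
      simp only [Sum.elim_inr, Pi.add_apply, hUl, hUr, Matrix.one_mulVec, Matrix.zero_mulVec,
        Pi.zero_apply, add_zero]
      have hUinr : μ * U (Sum.inr i) = u i := by
        simp only [hU, Sum.elim_inr, Pi.smul_apply, smul_eq_mul, ← mul_assoc]
        rw [mul_inv_cancel₀ hμpos.ne', one_mul]
      rw [hUinr]
  exact le_specRad (fromBlocks_nonneg hBpos hCpos) hU0 hUne hμpos.le hWU
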